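/- The function f(x) = (1/(4π))·(3√((2−|x|)/|x|) − 2 arctan(√((2−|x|)/|x|)))·1_{[−2,2]}(x) is nonnegative and ∫_{−2}^{2} f(x) dx = 1. -/

import Mathlib

open Real

/-- Waiting-time-corrected density for the triggered shot noise with l = 2. -/
noncomputable def fwt (x : ℝ) : ℝ :=
  Set.indicator (Set.Icc (-2 : ℝ) 2)
    (fun x => 1 / (4 * π) *
      (3 * Real.sqrt ((2 - |x|) / |x|) - 2 * Real.arctan (Real.sqrt ((2 - |x|) / |x|)))) x

namespace FwtAux

open Set MeasureTheory intervalIntegral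

/-- arctan is below the identity for nonnegative arguments. -/
lemma arctan_le_self {u : ℝ} (hu : 0 ≤ u) : Real.arctan u ≤ u := by
  rcases eq_or_lt_of_le hu with h | h
  · simp [← h]
  · have h1 : 0 < Real.arctan u := by
      have := Real.arctan_strictMono h
      simpa using this
    have h2 : Real.arctan u < π / 2 := Real.arctan_lt_pi_div_two u
    have := Real.lt_tan h1 h2
    rw [Real.tan_arctan] at this
    exact this.le

noncomputable def h (x : ℝ) : ℝ :=
  1 / (4 * π) * (3 * Real.sqrt ((2 - x) / x) + 2 * Real.arcsin (Real.sqrt (x / 2)) - π)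

noncomputable def F (x : ℝ) : ℝ :=
  1 / (4 * π) * ((4 + 2 * x) * Real.arcsin (Real.sqrt (x / 2))
    + 4 * Real.sqrt (x * (2 - x)) - π * x)

/-- Key identity on (0,2]: arctan √((2−x)/x) = π/2 − arcsin √(x/2). -/
lemma key {x : ℝ} (hx : x ∈ Set.Ioc (0:ℝ) 2) :
    Real.arctan (Real.sqrt ((2 - x) / x)) = π / 2 - Real.arcsin (Real.sqrt (x / 2)) := by
  obtain ⟨hx0, hx2⟩ := hx
  rcases eq_or_lt_of_le hx2 with h2 | h2
  · subst h2
    norm_num [Real.arcsin_one]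
  · have hmem : Real.sqrt (x / 2) ∈ Set.Ioo (-(1:ℝ)) 1 := by
      constructor
      · have := Real.sqrt_nonneg (x / 2); linarith
      · rw [show (1:ℝ) = Real.sqrt 1 by simp]
        exact Real.sqrt_lt_sqrt (by positivity) (by linarith)
    have harcsin := Real.arcsin_eq_arctan hmem
    have hsq : Real.sqrt (x / 2) ^ 2 = x / 2 := Real.sq_sqrt (by positivity)
    have hx2' : (0:ℝ) < 2 - x := by linarith
    have h2pos : (0:ℝ) < Real.sqrt 2 := Real.sqrt_pos.mpr (by norm_num)
    have hrw : Real.sqrt (x / 2) / Real.sqrt (1 - Real.sqrt (x / 2) ^ 2)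
        = (Real.sqrt ((2 - x) / x))⁻¹ := by
      rw [hsq, show (1 : ℝ) - x / 2 = (2 - x) / 2 by ring,
        Real.sqrt_div hx0.le, Real.sqrt_div hx2'.le,
        ← Real.sqrt_inv, inv_div, Real.sqrt_div hx0.le]
      field_simp
    rw [hrw] at harcsin
    have hy : (0:ℝ) < Real.sqrt ((2 - x) / x) := Real.sqrt_pos.mpr (by positivity)
    rw [Real.arctan_inv_of_pos hy] at harcsin
    linarith

lemma hasDerivAt_F {x : ℝ} (hx : x ∈ Set.Ioo (0:ℝ) 2) : HasDerivAt F (h x) x := by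
  obtain ⟨hx0, hx2⟩ := hx
  have hx2' : (0:ℝ) < 2 - x := by linarith
  have hsq : Real.sqrt (x / 2) ^ 2 = x / 2 := Real.sq_sqrt (by positivity)
  have hne1 : Real.sqrt (x / 2) ≠ 1 := by
    intro hcon
    have : Real.sqrt (x/2) ^ 2 = 1 := by rw [hcon]; ring
    rw [hsq] at this; linarith
  have hnem1 : Real.sqrt (x / 2) ≠ -1 := by
    have := Real.sqrt_nonneg (x / 2); intro hcon; rw [hcon] at this; linarith
  have d1 : HasDerivAt (fun y : ℝ => y / 2) (1 / 2) x := by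
    simpa using (hasDerivAt_id x).div_const 2
  have d2 : HasDerivAt (fun y : ℝ => Real.sqrt (y / 2)) ((1/2) / (2 * Real.sqrt (x/2))) x :=
    d1.sqrt (by positivity)
  have d3 : HasDerivAt (fun y : ℝ => Real.arcsin (Real.sqrt (y / 2)))
      (1 / Real.sqrt (1 - Real.sqrt (x/2) ^ 2) * ((1/2) / (2 * Real.sqrt (x/2)))) x :=
    HasDerivAt.comp (h₂ := Real.arcsin) x (Real.hasDerivAt_arcsin hnem1 hne1) d2
  have d4 : HasDerivAt (fun y : ℝ => (4 + 2 * y)) 2 x := by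
    simpa using ((hasDerivAt_id x).const_mul 2).const_add (4:ℝ)
  have d5 := d4.mul d3
  have d6 : HasDerivAt (fun y : ℝ => y * (2 - y)) (2 - 2 * x) x := by
    have hd := (hasDerivAt_id x).mul ((hasDerivAt_const x (2:ℝ)).sub (hasDerivAt_id x))
    simp only [id_eq] at hd
    refine hd.congr_deriv ?_
    simp only [Pi.sub_apply, id_eq]
    ring
  have d7 : HasDerivAt (fun y : ℝ => Real.sqrt (y * (2 - y)))
      ((2 - 2*x) / (2 * Real.sqrt (x * (2 - x)))) x :=
    d6.sqrt (ne_of_gt (by positivity))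
  have d8 : HasDerivAt (fun y : ℝ => π * y) (π * 1) x := (hasDerivAt_id x).const_mul π
  have dF : HasDerivAt F
      (1 / (4 * π) * ((2 * Real.arcsin (Real.sqrt (x/2))
        + (4 + 2*x) * (1 / Real.sqrt (1 - Real.sqrt (x/2) ^ 2) * ((1/2) / (2 * Real.sqrt (x/2))))
        + 4 * ((2 - 2*x) / (2 * Real.sqrt (x * (2 - x))))) - π * 1)) x :=
    ((d5.add (d7.const_mul 4)).sub d8).const_mul (1 / (4 * π))
  convert dF using 1
  -- algebraic identity between the two derivative expressions
  have hA : Real.sqrt (1 - Real.sqrt (x/2) ^ 2) = Real.sqrt (2 - x) / Real.sqrt 2 := by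
    rw [hsq, show (1:ℝ) - x/2 = (2-x)/2 by ring, Real.sqrt_div hx2'.le]
  have hB : Real.sqrt (x / 2) = Real.sqrt x / Real.sqrt 2 := Real.sqrt_div hx0.le 2
  have hC : Real.sqrt (x * (2 - x)) = Real.sqrt x * Real.sqrt (2 - x) :=
    Real.sqrt_mul hx0.le _
  have hD : Real.sqrt ((2 - x) / x) = Real.sqrt (2 - x) / Real.sqrt x :=
    Real.sqrt_div hx2'.le x
  have hu : (0:ℝ) < Real.sqrt x := Real.sqrt_pos.mpr hx0
  have hv : (0:ℝ) < Real.sqrt (2 - x) := Real.sqrt_pos.mpr hx2'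
  have hw : (0:ℝ) < Real.sqrt 2 := Real.sqrt_pos.mpr (by norm_num)
  have hu2 : Real.sqrt x ^ 2 = x := Real.sq_sqrt hx0.le
  have hv2 : Real.sqrt (2 - x) ^ 2 = 2 - x := Real.sq_sqrt hx2'.le
  have hw2 : Real.sqrt 2 ^ 2 = 2 := Real.sq_sqrt (by norm_num)
  have hpi : π ≠ 0 := Real.pi_ne_zero
  rw [h, hA, hB, hC, hD]
  set u := Real.sqrt x with hudef
  set v := Real.sqrt (2 - x) with hvdef
  set w := Real.sqrt 2 with hwdef
  have e1 : (1:ℝ) / (v / w) * ((1/2) / (2 * (u / w))) = w^2 / (4 * (u * v)) := by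
    field_simp
    ring
  rw [e1, hw2]
  have e2 : 3 * (v / u) = 3 * v^2 / (u * v) := by
    rw [pow_two]
    field_simp
  rw [e2, hv2]
  field_simp
  ring

lemma continuous_F : Continuous F := by
  unfold F
  have h1 : Continuous fun x : ℝ => Real.arcsin (Real.sqrt (x / 2)) :=
    Real.continuous_arcsin.comp (Real.continuous_sqrt.comp (by continuity))
  have h2 : Continuous fun x : ℝ => Real.sqrt (x * (2 - x)) :=
    Real.continuous_sqrt.comp (by continuity)
  continuity

lemma hint : IntervalIntegrable h volume 0 2 := by
  have hphi : IntervalIntegrable (fun x : ℝ => x ^ (-(1:ℝ)/2) + 1) volume 0 2 :=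
    (intervalIntegral.intervalIntegrable_rpow' (by norm_num)).add intervalIntegrable_const
  apply hphi.mono_fun'
  · -- measurability of h
    apply Measurable.aestronglyMeasurable
    unfold h
    apply Measurable.const_mul
    apply Measurable.sub
    · apply Measurable.add
      · exact (Real.continuous_sqrt.measurable.comp
          ((measurable_const.sub measurable_id).div measurable_id)).const_mul 3
      · exact ((Real.continuous_arcsin.comp (Real.continuous_sqrt.comp
          (by continuity))).measurable).const_mul 2
    · exact measurable_const
  · rw [Set.uIoc_of_le (by norm_num : (0:ℝ) ≤ 2)]
    refine MeasureTheory.ae_restrict_of_forall_mem measurableSet_Ioc ?_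
    intro x hx
    obtain ⟨hx0, hx2⟩ := hx
    have hπ : (0:ℝ) < π := Real.pi_pos
    have hsx : (0:ℝ) < Real.sqrt x := Real.sqrt_pos.mpr hx0
    have hs : Real.sqrt ((2 - x) / x) ≤ 2 / Real.sqrt x := by
      have h4 : (2 - x) / x ≤ 4 / x := by gcongr; linarith
      calc Real.sqrt ((2 - x) / x) ≤ Real.sqrt (4 / x) := Real.sqrt_le_sqrt h4
        _ = 2 / Real.sqrt x := by
            rw [Real.sqrt_div (by norm_num : (0:ℝ) ≤ 4),
              show (4:ℝ) = 2^2 by norm_num, Real.sqrt_sq (by norm_num : (0:ℝ) ≤ 2)]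
    have habs : |h x| ≤ 1 / (4*π) * (3 * Real.sqrt ((2 - x) / x) + π) := by
      unfold h
      rw [abs_mul, abs_of_nonneg (by positivity : (0:ℝ) ≤ 1/(4*π))]
      apply mul_le_mul_of_nonneg_left _ (by positivity)
      have hAnn : 0 ≤ Real.sqrt ((2-x)/x) := Real.sqrt_nonneg _
      have hB1 : 0 ≤ Real.arcsin (Real.sqrt (x/2)) := Real.arcsin_nonneg.mpr (Real.sqrt_nonneg _)
      have hB2 : Real.arcsin (Real.sqrt (x/2)) ≤ π/2 := Real.arcsin_le_pi_div_two _
      rw [abs_le]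
      constructor <;> nlinarith
    have hxr : x ^ (-(1:ℝ)/2) = 1 / Real.sqrt x := by
      rw [Real.sqrt_eq_rpow, eq_comm, one_div, ← Real.rpow_neg hx0.le]
      norm_num
    simp only [Real.norm_eq_abs]
    rw [hxr]
    calc |h x| ≤ 1 / (4*π) * (3 * Real.sqrt ((2 - x) / x) + π) := habs
      _ ≤ 1 / (4*π) * (3 * (2 / Real.sqrt x) + π) := by gcongr
      _ ≤ 1 / Real.sqrt x + 1 := by
          have hπ3 : (3:ℝ) < π := Real.pi_gt_three
          have e : 1/(4*π) * (3 * (2 / Real.sqrt x) + π) = 6/(4*π) * (1/Real.sqrt x) + 1/4 := by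
            field_simp
            ring
          rw [e]
          have h6 : 6/(4*π) ≤ 1 := by
            rw [div_le_one (by positivity)]
            nlinarith
          have hinv : (0:ℝ) ≤ 1/Real.sqrt x := by positivity
          have := mul_le_mul_of_nonneg_right h6 hinv
          rw [one_mul] at this
          linarith

lemma F_zero : F 0 = 0 := by
  unfold F
  rw [show (0:ℝ)/2 = 0 by norm_num, show (0:ℝ) * (2 - 0) = 0 by norm_num,
    Real.sqrt_zero, Real.arcsin_zero]
  ring

lemma F_two : F 2 = 1/2 := by
  unfold F
  rw [show (2:ℝ)/2 = 1 by norm_num, show (2:ℝ) * (2 - 2) = 0 by norm_num,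
    Real.sqrt_one, Real.sqrt_zero, Real.arcsin_one]
  have hpi : π ≠ 0 := Real.pi_ne_zero
  field_simp
  ring

end FwtAux

theorem fwt_is_density :
    (∀ x : ℝ, 0 ≤ fwt x) ∧ (∫ x in (-2 : ℝ)..2, fwt x) = 1 := by
  constructor
  · intro x
    unfold fwt
    apply Set.indicator_nonneg
    intro y _
    have hu : 0 ≤ Real.sqrt ((2 - |y|) / |y|) := Real.sqrt_nonneg _
    have harc := FwtAux.arctan_le_self hu
    have hπ : (0:ℝ) < π := Real.pi_pos
    have h1 : (0:ℝ) ≤ 3 * Real.sqrt ((2 - |y|)/|y|)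
        - 2 * Real.arctan (Real.sqrt ((2 - |y|)/|y|)) := by linarith
    exact mul_nonneg (by positivity) h1
  · have h02 : (0:ℝ) ≤ 2 := by norm_num
    have heq : ∀ x ∈ Set.Ioc (0:ℝ) 2, fwt x = FwtAux.h x := by
      intro x hx
      unfold fwt FwtAux.h
      rw [Set.indicator_of_mem (by exact ⟨by linarith [hx.1], hx.2⟩ : x ∈ Set.Icc (-2:ℝ) 2)]
      rw [abs_of_pos hx.1, FwtAux.key hx]
      ring
    have hFTC : ∫ x in (0:ℝ)..2, FwtAux.h x = 1/2 := by
      rw [intervalIntegral.integral_eq_sub_of_hasDeriv_right_of_le h02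
        FwtAux.continuous_F.continuousOn
        (fun x hx => (FwtAux.hasDerivAt_F hx).hasDerivWithinAt) FwtAux.hint]
      rw [FwtAux.F_two, FwtAux.F_zero]
      norm_num
    have haeq : fwt =ᵐ[MeasureTheory.volume.restrict (Set.uIoc 0 2)] FwtAux.h := by
      rw [Set.uIoc_of_le h02]
      exact (MeasureTheory.ae_restrict_iff' measurableSet_Ioc).mpr
        (Filter.Eventually.of_forall heq)
    have hi02 : IntervalIntegrable fwt MeasureTheory.volume 0 2 :=
      FwtAux.hint.congr_ae haeq.symm
    have hI1 : ∫ x in (0:ℝ)..2, fwt x = 1/2 := by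
      have hcongr : ∫ x in (0:ℝ)..2, fwt x = ∫ x in (0:ℝ)..2, FwtAux.h x :=
        intervalIntegral.integral_congr_ae (Filter.Eventually.of_forall
          (fun x hx => heq x (by rwa [Set.uIoc_of_le h02] at hx)))
      rw [hcongr]
      exact hFTC
    have heven : ∀ x : ℝ, fwt (-x) = fwt x := by
      intro x
      unfold fwt
      have hmem : (-x ∈ Set.Icc (-2:ℝ) 2) ↔ (x ∈ Set.Icc (-2:ℝ) 2) := by
        simp only [Set.mem_Icc]
        constructor <;> intro h <;> exact ⟨by linarith [h.1, h.2], by linarith [h.1, h.2]⟩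
      by_cases hx : x ∈ Set.Icc (-2:ℝ) 2
      · rw [Set.indicator_of_mem (hmem.mpr hx), Set.indicator_of_mem hx, abs_neg]
      · rw [Set.indicator_of_notMem (fun hc => hx (hmem.mp hc)), Set.indicator_of_notMem hx]
    have hi20 : IntervalIntegrable fwt MeasureTheory.volume (-2) 0 := by
      have h1 : IntervalIntegrable (fun x => fwt (-x)) MeasureTheory.volume 0 2 := by
        have : (fun x => fwt (-x)) = fwt := funext heven
        rw [this]
        exact hi02
      exact (IntervalIntegrable.iff_comp_neg enorm_ne_top).mpr (by simpa using h1.symm)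
    have hI2 : ∫ x in (-2:ℝ)..0, fwt x = 1/2 := by
      have hcn := intervalIntegral.integral_comp_neg (a := (0:ℝ)) (b := 2) (f := fwt)
      simp only [heven, neg_zero] at hcn
      rw [← hcn]
      exact hI1
    have hadd := intervalIntegral.integral_add_adjacent_intervals hi20 hi02
    rw [← hadd, hI1, hI2]
    norm_num
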